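/- Let q be an even prime power (q = 2^n). The number of triples (S,R,P) ∈ F_q³ with P ≠ S such that the polynomial U² + U + R(S+P+R+1)/(P+S)² has two roots in F_q equals (q³−q²)/2. -/

import Mathlib

/-- For `q = 2^n`, the number of triples `(S,R,P) ∈ F_q³` with `P ≠ S` such
that `(P+S)²U² + (P+S)²U + R(S+P+R+1) = 0` has a solution `U ∈ F_q` equals `(q³−q²)/2`. -/
theorem stmt9 (n q : ℕ) (hn : 0 < n) (hq : q = 2 ^ n)
    (F : Type*) [Field F] [Fintype F] (hF : Fintype.card F = q) :
    Nat.card {x : F × F × F | x.2.2 ≠ x.1 ∧ ∃ U : F,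
      (x.2.2 + x.1) ^ 2 * U ^ 2 + (x.2.2 + x.1) ^ 2 * U +
        x.2.1 * (x.1 + x.2.2 + x.2.1 + 1) = 0} = (q ^ 3 - q ^ 2) / 2 := by
  classical
  -- characteristic 2
  have h2 : (2 : F) = 0 := by
    have hc : ((Fintype.card F : ℕ) : F) = 0 := FiniteField.cast_card_eq_zero F
    rw [hF, hq] at hc
    push_cast at hc
    exact pow_eq_zero_iff hn.ne' |>.mp hc
  have hne : ∀ P S : F, P ≠ S → P + S ≠ 0 := by
    intro P S hPS h
    exact hPS (by linear_combination h - S * h2)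
  set f : F × F × F → F × F × F :=
    fun x => (x.1, (x.2.2 + x.1) ^ 2 * (x.2.1 ^ 2 + x.2.1), x.2.2) with hf
  set T : Finset (F × F × F) := Finset.univ.filter (fun x => x.2.2 ≠ x.1) with hT
  -- the set is the image of `f` on `T`
  have hset : {x : F × F × F | x.2.2 ≠ x.1 ∧ ∃ U : F,
      (x.2.2 + x.1) ^ 2 * U ^ 2 + (x.2.2 + x.1) ^ 2 * U +
        x.2.1 * (x.1 + x.2.2 + x.2.1 + 1) = 0} = ↑(T.image f) := by
    ext ⟨S, R, P⟩
    simp only [Set.mem_setOf_eq, Finset.coe_image, Set.mem_image, Finset.mem_coe, hT,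
      Finset.mem_filter, Finset.mem_univ, true_and]
    constructor
    · rintro ⟨hPS, U, hU⟩
      have ha : P + S ≠ 0 := hne P S hPS
      have hinv : (P + S) * (P + S)⁻¹ = 1 := mul_inv_cancel₀ ha
      refine ⟨(S, U + R * (P + S)⁻¹, P), hPS, ?_⟩
      simp only [hf, Prod.mk.injEq]
      refine ⟨by trivial, ?_, by trivial⟩
      linear_combination hU + (R ^ 2 * ((P + S) * (P + S)⁻¹ + 1) + (P + S) * R) * hinv +
        ((P + S) ^ 2 * U * R * (P + S)⁻¹ - R) * h2
    · rintro ⟨⟨A, W, B⟩, hPS, heq⟩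
      simp only [hf, Prod.mk.injEq] at heq
      obtain ⟨rfl, hR, rfl⟩ := heq
      refine ⟨hPS, W + (B + A) * W ^ 2 + (B + A) * W, ?_⟩
      rw [← hR]
      linear_combination ((B + A) ^ 4 * W ^ 4 + 2 * (B + A) ^ 4 * W ^ 3 + (B + A) ^ 4 * W ^ 2 +
        (B + A) ^ 3 * W ^ 3 + 2 * (B + A) ^ 3 * W ^ 2 + (B + A) ^ 3 * W +
        (B + A) ^ 2 * W ^ 2 + (B + A) ^ 2 * W) * h2
  rw [hset, Nat.card_coe_set_eq, Set.ncard_coe_finset]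
  -- cardinality of T
  have hTcard : T.card = q ^ 3 - q ^ 2 := by
    have hD : (Finset.univ.filter (fun x : F × F × F => ¬ x.2.2 ≠ x.1)).card = q ^ 2 := by
      have : (Finset.univ.filter (fun x : F × F × F => ¬ x.2.2 ≠ x.1)).card
          = (Finset.univ : Finset (F × F)).card := by
        refine Finset.card_nbij' (fun x => (x.1, x.2.1)) (fun y => (y.1, y.2, y.1)) ?_ ?_ ?_ ?_
        · intro a _; exact Finset.mem_univ _
        · intro a _
          simp [hT]
        · intro a ha
          change a ∈ Finset.univ.filter (fun x : F × F × F => ¬ x.2.2 ≠ x.1) at ha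
          simp only [Finset.mem_filter, Finset.mem_univ, true_and, not_not] at ha
          exact Prod.ext rfl (Prod.ext rfl ha.symm)
        · intro a _; rfl
      rw [this, Finset.card_univ, Fintype.card_prod, hF]
      ring
    have hsum := Finset.card_filter_add_card_filter_not
      (s := (Finset.univ : Finset (F × F × F))) (fun x : F × F × F => x.2.2 ≠ x.1)
    rw [hD, Finset.card_univ, Fintype.card_prod, Fintype.card_prod, hF] at hsum
    have hq3 : q * (q * q) = q ^ 3 := by ring
    rw [hq3] at hsum
    rw [hT]
    omega
  -- each fiber of f on T has exactly two elements
  have hfib : ∀ b ∈ T.image f, (T.filter (fun x => f x = b)).card = 2 := by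
    intro b hb
    obtain ⟨⟨S, W, P⟩, hmem, rfl⟩ := Finset.mem_image.mp hb
    simp only [hT, Finset.mem_filter, Finset.mem_univ, true_and] at hmem
    have ha : P + S ≠ 0 := hne P S hmem
    have key : T.filter (fun x => f x = f (S, W, P)) = {(S, W, P), (S, W + 1, P)} := by
      ext x
      obtain ⟨c1, c2, c3⟩ := x
      simp only [hT, Finset.mem_filter, Finset.mem_univ, true_and, hf, Prod.mk.injEq,
        Finset.mem_insert, Finset.mem_singleton]
      constructor
      · rintro ⟨hne', hc1, hy, hc3⟩
        rw [hc1, hc3] at hy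
        have hy' : c2 ^ 2 + c2 = W ^ 2 + W :=
          mul_left_cancel₀ (pow_ne_zero 2 ha) hy
        have hfac : (c2 + W) * (c2 + W + 1) = 0 := by
          linear_combination hy' + (W ^ 2 + W + W * c2) * h2
        rcases mul_eq_zero.mp hfac with hc | hc
        · left; exact ⟨hc1, by linear_combination hc - W * h2, hc3⟩
        · right; exact ⟨hc1, by linear_combination hc - (W + 1) * h2, hc3⟩
      · rintro (⟨hc1, hc2, hc3⟩ | ⟨hc1, hc2, hc3⟩)
        · refine ⟨by rw [hc1, hc3]; exact hmem, hc1, by rw [hc1, hc2, hc3], hc3⟩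
        · refine ⟨by rw [hc1, hc3]; exact hmem, hc1, ?_, hc3⟩
          rw [hc1, hc2, hc3]
          linear_combination (P + S) ^ 2 * (W + 1) * h2
    rw [key, Finset.card_pair]
    intro h
    have h' : W = W + 1 := (Prod.ext_iff.mp (Prod.ext_iff.mp h).2).1
    exact one_ne_zero (left_eq_add.mp h')
  have hsum := Finset.card_eq_sum_card_image f T
  rw [Finset.sum_congr rfl hfib, Finset.sum_const, smul_eq_mul, hTcard] at hsum
  omega
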